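/- With p > 1, q = p/(p-1), and G̃_p the normalized generalized Gaussian as above, the p-entropy satisfies H_p(G̃_p) = log( (p^{1/p} q^{1/q} e^{1/q})^n · π^{n/2} · Γ(n/q+1)/Γ(n/2+1) ). -/

import Mathlib

open MeasureTheory

/-- Normalizing constant of the generalized Gaussian. -/
noncomputable def Cpn (n : ℕ) (p q : ℝ) : ℝ :=
  (p ^ (1 / p) * q ^ (1 / q)) ^ (-(n : ℝ)) * Real.pi ^ (-(n : ℝ) / 2) *
    (Real.Gamma ((n : ℝ) / 2 + 1) / Real.Gamma ((n : ℝ) / q + 1))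

/-- The generalized Gaussian profile of the fundamental solution of the p-heat equation. -/
noncomputable def Gp (n : ℕ) (p q : ℝ) (x : EuclideanSpace ℝ (Fin n)) : ℝ :=
  (Cpn n p q * Real.exp (-((p - 1) / p ^ q) * ‖x‖ ^ q)) ^ (1 / (p - 1))

theorem pEntropy_Gp (n : ℕ) (hn : 1 ≤ n) (p q : ℝ) (hp : 1 < p)
    (hq : q = p / (p - 1)) :
    (-∫ x, Gp n p q x ^ (p - 1) * Real.log (Gp n p q x ^ (p - 1))) =
      Real.log ((p ^ (1 / p) * q ^ (1 / q) * Real.exp (1 / q)) ^ (n : ℝ) *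
        Real.pi ^ ((n : ℝ) / 2) *
        (Real.Gamma ((n : ℝ) / q + 1) / Real.Gamma ((n : ℝ) / 2 + 1))) := by
  have hp0 : (0:ℝ) < p := lt_trans one_pos hp
  have hpm1 : (0:ℝ) < p - 1 := sub_pos.mpr hp
  have hq0 : 0 < q := hq ▸ div_pos hp0 hpm1
  have hq1 : 1 ≤ q := by rw [hq, le_div_iff₀ hpm1]; linarith
  have hn1 : (1:ℝ) ≤ (n:ℝ) := by exact_mod_cast hn
  have hnq : (0:ℝ) < (n:ℝ)/q := by positivity
  have hpqpos : (0:ℝ) < p ^ q := Real.rpow_pos_of_pos hp0 q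
  set b : ℝ := (p - 1) / p ^ q with hbdef
  have hb : 0 < b := div_pos hpm1 hpqpos
  have hΓh : 0 < Real.Gamma ((n:ℝ)/2 + 1) := Real.Gamma_pos_of_pos (by positivity)
  have hΓq : 0 < Real.Gamma ((n:ℝ)/q + 1) := Real.Gamma_pos_of_pos (by positivity)
  have hXpos : (0:ℝ) < p ^ (1/p) * q ^ (1/q) := by positivity
  set A : ℝ := Cpn n p q with hAdef
  have hA : 0 < A := by
    rw [hAdef, Cpn]
    exact mul_pos (mul_pos (Real.rpow_pos_of_pos hXpos _)
      (Real.rpow_pos_of_pos Real.pi_pos _)) (div_pos hΓh hΓq)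
  -- the profile to the power p-1
  have key : ∀ x : EuclideanSpace ℝ (Fin n),
      Gp n p q x ^ (p - 1) = A * Real.exp (-b * ‖x‖ ^ q) := by
    intro x
    rw [Gp, ← hbdef, ← hAdef, ← Real.rpow_mul (le_of_lt (mul_pos hA (Real.exp_pos _))),
      one_div_mul_cancel (ne_of_gt hpm1), Real.rpow_one]
  -- X = b ^ (-(1/q))
  have hbpowpos : 0 < b ^ (-(1/q) : ℝ) := Real.rpow_pos_of_pos hb _
  have hXb : p ^ (1/p) * q ^ (1/q) = b ^ (-(1/q) : ℝ) := by
    have hlog : Real.log (p ^ (1/p) * q ^ (1/q)) = Real.log (b ^ (-(1/q) : ℝ)) := by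
      rw [Real.log_mul (by positivity) (by positivity), Real.log_rpow hp0,
        Real.log_rpow hq0, Real.log_rpow hb, hbdef,
        Real.log_div (ne_of_gt hpm1) (ne_of_gt hpqpos), Real.log_rpow hp0]
      have hlq : Real.log q = Real.log p - Real.log (p-1) := by
        rw [hq, Real.log_div (ne_of_gt hp0) (ne_of_gt hpm1)]
      rw [hlq, hq]
      field_simp
      ring
    rw [← Real.exp_log hXpos, ← Real.exp_log hbpowpos, hlog]
  -- log of the constant
  have hlogA : Real.log A = -(n:ℝ) * Real.log (p ^ (1/p) * q ^ (1/q))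
      - ((n:ℝ)/2) * Real.log Real.pi
      + Real.log (Real.Gamma ((n:ℝ)/2 + 1)) - Real.log (Real.Gamma ((n:ℝ)/q + 1)) := by
    rw [hAdef, Cpn, Real.log_mul (by positivity) (ne_of_gt (div_pos hΓh hΓq)),
      Real.log_mul (by positivity) (by positivity), Real.log_rpow hXpos,
      Real.log_rpow Real.pi_pos, Real.log_div (ne_of_gt hΓh) (ne_of_gt hΓq)]
    ring
  -- log of the right-hand side
  have hRHS : Real.log ((p ^ (1 / p) * q ^ (1 / q) * Real.exp (1 / q)) ^ (n : ℝ) *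
        Real.pi ^ ((n : ℝ) / 2) *
        (Real.Gamma ((n : ℝ) / q + 1) / Real.Gamma ((n : ℝ) / 2 + 1)))
      = (n:ℝ) * Real.log (p ^ (1/p) * q ^ (1/q)) + (n:ℝ)/q
        + ((n:ℝ)/2) * Real.log Real.pi
        + Real.log (Real.Gamma ((n:ℝ)/q + 1)) - Real.log (Real.Gamma ((n:ℝ)/2 + 1)) := by
    rw [Real.log_mul (by positivity) (ne_of_gt (div_pos hΓq hΓh)),
      Real.log_mul (by positivity) (by positivity),
      Real.log_rpow (by positivity), Real.log_rpow Real.pi_pos,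
      Real.log_div (ne_of_gt hΓq) (ne_of_gt hΓh),
      Real.log_mul (ne_of_gt hXpos) (Real.exp_ne_zero _), Real.log_exp]
    ring
  -- reduce to a 1-dimensional integral
  haveI : NeZero n := ⟨by omega⟩
  have hstep : (∫ x : EuclideanSpace ℝ (Fin n),
        A * Real.exp (-b * ‖x‖ ^ q) * Real.log (A * Real.exp (-b * ‖x‖ ^ q)))
      = (n:ℝ) * (volume (Metric.ball (0:EuclideanSpace ℝ (Fin n)) 1)).toReal *
          ∫ y in Set.Ioi (0:ℝ),
            y ^ (n - 1) * (A * Real.exp (-b * y ^ q) * Real.log (A * Real.exp (-b * y ^ q))) := by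
    have := integral_fun_norm_addHaar (volume : Measure (EuclideanSpace ℝ (Fin n)))
      (fun y : ℝ => A * Real.exp (-b * y ^ q) * Real.log (A * Real.exp (-b * y ^ q)))
    simpa [finrank_euclideanSpace, Fintype.card_fin, mul_assoc, smul_eq_mul, measureReal_def] using this
  -- the volume of the unit ball
  have hW : (volume (Metric.ball (0:EuclideanSpace ℝ (Fin n)) 1)).toReal
      = Real.pi ^ ((n:ℝ)/2) / Real.Gamma ((n:ℝ)/2 + 1) := by
    rw [EuclideanSpace.volume_ball]
    simp only [ENNReal.ofReal_one, one_pow, one_mul, Fintype.card_fin]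
    rw [ENNReal.toReal_ofReal (by positivity)]
    congr 1
    rw [Real.sqrt_eq_rpow, ← Real.rpow_natCast (Real.pi ^ ((1:ℝ)/2)) n,
      ← Real.rpow_mul Real.pi_pos.le]
    ring_nf
  -- the 1-dimensional integral
  have hs0 : (-1:ℝ) < (n:ℝ) - 1 := by linarith
  have hs1 : (-1:ℝ) < (n:ℝ) - 1 + q := by linarith
  have hInt0 : IntegrableOn (fun y : ℝ => y ^ ((n:ℝ)-1) * Real.exp (-b * y ^ q)) (Set.Ioi 0) :=
    integrableOn_rpow_mul_exp_neg_mul_rpow hs0 hq0 hb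
  have hInt1 : IntegrableOn (fun y : ℝ => y ^ ((n:ℝ)-1+q) * Real.exp (-b * y ^ q)) (Set.Ioi 0) :=
    integrableOn_rpow_mul_exp_neg_mul_rpow hs1 hq0 hb
  have h1d : (∫ y in Set.Ioi (0:ℝ),
        y ^ (n - 1) * (A * Real.exp (-b * y ^ q) * Real.log (A * Real.exp (-b * y ^ q))))
      = (A * Real.log A) * (b ^ (-((n:ℝ)-1+1)/q) * (1/q) * Real.Gamma (((n:ℝ)-1+1)/q))
        - (A * b) * (b ^ (-((n:ℝ)-1+q+1)/q) * (1/q) * Real.Gamma (((n:ℝ)-1+q+1)/q)) := by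
    have hEq : Set.EqOn
        (fun y : ℝ => y ^ (n - 1) * (A * Real.exp (-b * y ^ q) * Real.log (A * Real.exp (-b * y ^ q))))
        (fun y : ℝ => (A * Real.log A) * (y ^ ((n:ℝ)-1) * Real.exp (-b * y ^ q))
          - (A * b) * (y ^ ((n:ℝ)-1+q) * Real.exp (-b * y ^ q))) (Set.Ioi 0) := by
      intro y hy
      have hy0 : (0:ℝ) < y := hy
      simp only
      rw [Real.log_mul (ne_of_gt hA) (Real.exp_ne_zero _), Real.log_exp]
      have hyn : y ^ (n-1 : ℕ) = y ^ ((n:ℝ)-1) := by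
        rw [← Real.rpow_natCast y (n-1), Nat.cast_sub hn, Nat.cast_one]
      have hsplit : y ^ ((n:ℝ)-1+q) = y ^ ((n:ℝ)-1) * y ^ q := Real.rpow_add hy0 _ _
      rw [hyn, hsplit]
      ring
    rw [setIntegral_congr_fun measurableSet_Ioi hEq, integral_sub (hInt0.const_mul _) (hInt1.const_mul _),
      integral_const_mul, integral_const_mul,
      integral_rpow_mul_exp_neg_mul_rpow hq0 hs0 hb,
      integral_rpow_mul_exp_neg_mul_rpow hq0 hs1 hb]
  -- normalization: A * (W * B * Γ(n/q+1)) = 1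
  have hGadd : Real.Gamma ((n:ℝ)/q + 1) = ((n:ℝ)/q) * Real.Gamma ((n:ℝ)/q) :=
    Real.Gamma_add_one (ne_of_gt hnq)
  have hbb : b * b⁻¹ = 1 := mul_inv_cancel₀ (ne_of_gt hb)
  have hmain : A * ((Real.pi ^ ((n:ℝ)/2) / Real.Gamma ((n:ℝ)/2 + 1)) * b ^ (-((n:ℝ)/q))
      * Real.Gamma ((n:ℝ)/q + 1)) = 1 := by
    rw [hAdef, Cpn, hXb, ← Real.rpow_mul hb.le]
    have h1 : -(1/q) * (-(n:ℝ)) = (n:ℝ)/q := by ring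
    rw [h1]
    have hbB : b ^ ((n:ℝ)/q) * b ^ (-((n:ℝ)/q)) = 1 := by
      rw [← Real.rpow_add hb]; simp
    have hpi : Real.pi ^ (-(n:ℝ)/2) * Real.pi ^ ((n:ℝ)/2) = 1 := by
      rw [← Real.rpow_add Real.pi_pos, show -(n:ℝ)/2 + (n:ℝ)/2 = 0 by ring, Real.rpow_zero]
    have hΓc : Real.Gamma ((n:ℝ)/2 + 1) / Real.Gamma ((n:ℝ)/q + 1)
        * (Real.Gamma ((n:ℝ)/q + 1) / Real.Gamma ((n:ℝ)/2 + 1)) = 1 := by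
      field_simp
    linear_combination (Real.pi ^ (-(n:ℝ)/2) * Real.pi ^ ((n:ℝ)/2)
      * (Real.Gamma ((n:ℝ)/2 + 1) / Real.Gamma ((n:ℝ)/q + 1)
        * (Real.Gamma ((n:ℝ)/q + 1) / Real.Gamma ((n:ℝ)/2 + 1)))) * hbB
      + (Real.Gamma ((n:ℝ)/2 + 1) / Real.Gamma ((n:ℝ)/q + 1)
        * (Real.Gamma ((n:ℝ)/q + 1) / Real.Gamma ((n:ℝ)/2 + 1))) * hpi
      + hΓc
  -- put everything together
  simp_rw [key]
  rw [hstep, h1d, hW, hRHS]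
  have e0 : -((n:ℝ)-1+1)/q = -((n:ℝ)/q) := by ring
  have e0' : ((n:ℝ)-1+1)/q = (n:ℝ)/q := by ring
  have e1 : -((n:ℝ)-1+q+1)/q = -((n:ℝ)/q) + -1 := by field_simp; ring
  have e1' : ((n:ℝ)-1+q+1)/q = (n:ℝ)/q + 1 := by field_simp; ring
  rw [e0, e0', e1, e1', Real.rpow_add hb, Real.rpow_neg_one]
  linear_combination ((n:ℝ)/q - Real.log A) * hmain
    + ((n:ℝ) * (Real.pi ^ ((n:ℝ)/2) / Real.Gamma ((n:ℝ)/2 + 1)) * A * b ^ (-((n:ℝ)/q))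
      * (1/q) * Real.Gamma ((n:ℝ)/q + 1)) * hbb
    - hlogA
    + (A * (Real.pi ^ ((n:ℝ)/2) / Real.Gamma ((n:ℝ)/2 + 1)) * b ^ (-((n:ℝ)/q))
      * Real.log A) * hGadd
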